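/- arXiv:1704.08540 — 6 statements merged into one kernel-verified Lean document; each statement's English description precedes it below -/
import Mathlib

section
/- Let S be a set of states, A a set of actions, step : S → A → S → Prop a labelled transition relation, and I a symmetric relation on A such that whenever I a b, for all states s, s1, s2, if step s a s1 and step s1 b s2 then there exists s1' with step s b s1' and step s1' a s2. Let ≡ be the smallest equivalence relation on List A closed under u ++ [a,b] ++ v ≡ u ++ [b,a] ++ v for all a, b with I a b. Then for any words w ≡ w' and any states s, t, the word w can be executed from s ending in t (i.e., there is a sequence of steps through the letters of w) if and only if w' can be executed from s ending in t. -/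
inductive MEquiv {A : Type*} (I : A → A → Prop) : List A → List A → Prop
  | refl (w : List A) : MEquiv I w w
  | symm {w w'} : MEquiv I w w' → MEquiv I w' w
  | trans {w w' w''} : MEquiv I w w' → MEquiv I w' w'' → MEquiv I w w''
  | swap (u v : List A) (a b : A) : I a b →
      MEquiv I (u ++ [a, b] ++ v) (u ++ [b, a] ++ v)

inductive Exec {S A : Type*} (step : S → A → S → Prop) : S → List A → S → Prop
  | nil (s : S) : Exec step s [] s
  | cons {s s' t : S} {a : A} {w : List A} :
      step s a s' → Exec step s' w t → Exec step s (a :: w) t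

lemma exec_append {S A : Type*} {step : S → A → S → Prop} {s t : S} {u v : List A} :
    Exec step s (u ++ v) t ↔ ∃ m, Exec step s u m ∧ Exec step m v t := by
  induction u generalizing s with
  | nil =>
    simp only [List.nil_append]
    constructor
    · intro h; exact ⟨s, Exec.nil s, h⟩
    · rintro ⟨m, hm, hv⟩; cases hm; exact hv
  | cons a u ih =>
    constructor
    · intro h
      cases h with
      | cons hstep hrest =>
        obtain ⟨m, h1, h2⟩ := ih.mp hrest
        exact ⟨m, Exec.cons hstep h1, h2⟩
    · rintro ⟨m, hm, hv⟩
      cases hm with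
      | cons hstep hrest =>
        exact Exec.cons hstep (ih.mpr ⟨m, hrest, hv⟩)

lemma exec_swap {S A : Type*} {step : S → A → S → Prop} {s t : S} {a b : A}
    (hd : ∀ s s1 s2, step s a s1 → step s1 b s2 → ∃ s1', step s b s1' ∧ step s1' a s2)
    (h : Exec step s [a, b] t) : Exec step s [b, a] t := by
  rcases h with ⟨⟩ | ⟨h1, (⟨⟩ | ⟨h2, h3⟩)⟩
  cases h3
  obtain ⟨m, hm1, hm2⟩ := hd _ _ _ h1 h2
  exact Exec.cons hm1 (Exec.cons hm2 (Exec.nil _))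

theorem mequiv_exec_iff {S A : Type*} (step : S → A → S → Prop) (I : A → A → Prop)
    (hsymm : ∀ a b, I a b → I b a)
    (hdiamond : ∀ a b, I a b → ∀ s s1 s2, step s a s1 → step s1 b s2 →
      ∃ s1', step s b s1' ∧ step s1' a s2)
    {w w' : List A} (h : MEquiv I w w') (s t : S) :
    Exec step s w t ↔ Exec step s w' t := by
  induction h generalizing s t with
  | refl w => rfl
  | symm _ ih => exact (ih s t).symm
  | trans _ _ ih1 ih2 => exact (ih1 s t).trans (ih2 s t)
  | swap u v a b hab =>
    constructor <;> intro h <;>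
      obtain ⟨m, hm, hmv⟩ := exec_append.mp h <;>
      obtain ⟨m2, hm2, hm2v⟩ := exec_append.mp hm <;>
      refine exec_append.mpr ⟨m, exec_append.mpr ⟨m2, hm2, ?_⟩, hmv⟩
    · exact exec_swap (hdiamond a b hab) hm2v
    · exact exec_swap (hdiamond b a (hsymm a b hab)) hm2v
end

section
/- Let A be a type, I : A → A → Prop symmetric, and ≡ the Mazurkiewicz equivalence on List A generated by swapping adjacent independent letters. For any two letters a, b with ¬ I a b and ¬ I b a, and any words w ≡ w', the sublist of w consisting of all occurrences of letters belonging to {a, b} (taken in order) is equal to the corresponding sublist of w'. In other words, the projection onto any pair of mutually dependent letters is invariant under ≡. -/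
theorem mequiv_proj_pair_invariant {A : Type*} [DecidableEq A] (I : A → A → Prop)
    (hsymm : ∀ a b, I a b → I b a)
    (a b : A) (hab : ¬ I a b) (hba : ¬ I b a)
    {w w' : List A} (h : MEquiv I w w') :
    w.filter (fun x => decide (x = a ∨ x = b)) =
      w'.filter (fun x => decide (x = a ∨ x = b)) := by
  induction h with
  | refl w => rfl
  | symm _ ih => exact ih.symm
  | trans _ _ ih1 ih2 => exact ih1.trans ih2
  | swap u v c d hcd =>
    simp only [List.filter_append]
    congr 1
    congr 1
    by_cases hc : c = a ∨ c = b <;> by_cases hd : d = a ∨ d = b <;>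
      simp [List.filter, hc, hd]
    · rcases hc with rfl | rfl <;> rcases hd with rfl | rfl
      · exact ⟨rfl, rfl⟩
      · exact absurd hcd hab
      · exact absurd hcd hba
      · exact ⟨rfl, rfl⟩
end

section
/- Let A be a type equipped with a linear order, I : A → A → Prop a symmetric relation, and ≡ the Mazurkiewicz equivalence on List A generated by swapping adjacent independent letters. Then every ≡-equivalence class contains a unique element that is minimal for the lexicographic order on List A: i.e., for every word w there exists w₀ ≡ w such that w₀ ≤lex w' for all w' ≡ w, and any two such minimal elements are equal. -/
lemma mequiv_perm {A : Type*} {I : A → A → Prop} {w w' : List A}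
    (h : MEquiv I w w') : w.Perm w' := by
  induction h with
  | refl w => exact List.Perm.refl _
  | symm _ ih => exact ih.symm
  | trans _ _ ih1 ih2 => exact ih1.trans ih2
  | swap u v a b _ =>
      exact ((List.Perm.swap b a []).append_left u).append_right v

theorem mequiv_exists_unique_lex_min {A : Type*} [LinearOrder A] (I : A → A → Prop)
    (hsymm : ∀ a b, I a b → I b a)
    (w : List A) :
    ∃ w₀ : List A, (MEquiv I w w₀ ∧ ∀ w', MEquiv I w w' → w₀ ≤ w') ∧
      ∀ w₁ : List A, (MEquiv I w w₁ ∧ ∀ w', MEquiv I w w' → w₁ ≤ w') → w₁ = w₀ := by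
  classical
  set S : Finset (List A) :=
    w.permutations.toFinset.filter (fun w' => MEquiv I w w') with hS
  have hmem : ∀ w', MEquiv I w w' → w' ∈ S := by
    intro w' h
    simp only [hS, Finset.mem_filter, List.mem_toFinset, List.mem_permutations]
    exact ⟨(mequiv_perm h).symm, h⟩
  have hne : S.Nonempty := ⟨w, hmem w (MEquiv.refl w)⟩
  refine ⟨S.min' hne, ⟨?_, ?_⟩, ?_⟩
  · have := S.min'_mem hne
    simp only [hS, Finset.mem_filter] at this
    exact this.2
  · intro w' h
    exact S.min'_le w' (hmem w' h)
  · intro w₁ ⟨h1, h2⟩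
    have hle := S.min'_le w₁ (hmem w₁ h1)
    have := S.min'_mem hne
    simp only [hS, Finset.mem_filter] at this
    exact le_antisymm (h2 _ this.2) hle
end

section
/- Let A be a linearly ordered type, I : A → A → Prop a symmetric relation, and ≡ the Mazurkiewicz equivalence generated by swapping adjacent independent letters. A word w = [b₁, …, bₙ] is lexicographically minimal in its ≡-class if and only if there is no pair of indices i < j such that bⱼ < bᵢ and I bⱼ bₖ holds for every k with i ≤ k < j. (Anisimov–Knuth characterization of lexicographic normal forms of traces.) -/
section AK
set_option linter.unusedSectionVars false
variable {A : Type*} [LinearOrder A] {I : A → A → Prop}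

lemma MEquiv.length_eq {w w' : List A} (h : MEquiv I w w') : w.length = w'.length := by
  induction h with
  | refl => rfl
  | symm _ ih => omega
  | trans _ _ ih1 ih2 => omega
  | swap u v a b _ => simp

lemma MEquiv.filter_single {w w' : List A} (h : MEquiv I w w') (c : A) :
    w.filter (· = c) = w'.filter (· = c) := by
  induction h with
  | refl => rfl
  | symm _ ih => exact ih.symm
  | trans _ _ ih1 ih2 => exact ih1.trans ih2
  | swap u v a b _ =>
      simp only [List.filter_append]
      congr 1
      congr 1
      by_cases hac : a = c <;> by_cases hbc : b = c <;> simp [List.filter, hac, hbc]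

lemma MEquiv.filter_pair (hsymm : ∀ a b, I a b → I b a) {w w' : List A} (h : MEquiv I w w')
    (c d : A) (hcd : ¬ I c d) :
    w.filter (fun x => x = c ∨ x = d) = w'.filter (fun x => x = c ∨ x = d) := by
  induction h with
  | refl => rfl
  | symm _ ih => exact ih.symm
  | trans _ _ ih1 ih2 => exact ih1.trans ih2
  | swap u v a b hab =>
      simp only [List.filter_append]
      congr 1
      congr 1
      by_cases h1 : a = b
      · subst h1; rfl
      by_cases hac : a = c <;> by_cases had : a = d <;> by_cases hbc : b = c <;>
        by_cases hbd : b = d <;>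
        first
          | (exfalso; subst_vars; first | exact hcd hab | exact hcd (hsymm _ _ hab) | exact h1 rfl)
          | simp [List.filter, hac, had, hbc, hbd]

lemma MEquiv.bubble (hsymm : ∀ a b, I a b → I b a) (a : A) :
    ∀ (u p s : List A), (∀ x ∈ u, I a x) →
      MEquiv I (p ++ (u ++ a :: s)) (p ++ (a :: (u ++ s)))
  | [], p, s, _ => by simpa using MEquiv.refl _
  | x :: u, p, s, h => by
      have h1 : MEquiv I ((p ++ [x]) ++ (u ++ a :: s)) ((p ++ [x]) ++ (a :: (u ++ s))) :=
        MEquiv.bubble hsymm a u (p ++ [x]) s (fun y hy => h y (List.mem_cons_of_mem _ hy))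
      have h2 : MEquiv I (p ++ [x, a] ++ (u ++ s)) (p ++ [a, x] ++ (u ++ s)) :=
        MEquiv.swap p (u ++ s) x a (hsymm a x (h x (List.mem_cons_self)))
      have e1 : p ++ (x :: u ++ a :: s) = (p ++ [x]) ++ (u ++ a :: s) := by simp
      have e2 : (p ++ [x]) ++ (a :: (u ++ s)) = p ++ [x, a] ++ (u ++ s) := by simp
      have e3 : p ++ [a, x] ++ (u ++ s) = p ++ (a :: (x :: u ++ s)) := by simp
      rw [e1, ← e3]
      rw [e2] at h1
      exact h1.trans h2

lemma lex_middle (p : List A) {a b : A} (hba : b < a) (s t : List A) :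
    List.Lex (· < ·) (p ++ b :: s) (p ++ a :: t) := by
  induction p with
  | nil => exact List.Lex.rel hba
  | cons x p ih => exact List.Lex.cons ih

lemma lt_decomp {l m : List A} (h : List.Lex (· < ·) l m) :
    l.length = m.length →
    ∃ p a b u v, m = p ++ a :: u ∧ l = p ++ b :: v ∧ b < a := by
  induction h with
  | nil => intro hlen; simp at hlen
  | @rel a l b m hab => exact fun _ => ⟨[], b, a, m, l, rfl, rfl, hab⟩
  | @cons a l m h ih =>
      intro hlen
      obtain ⟨p, c, d, u, v, h1, h2, h3⟩ := ih (by simpa using hlen)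
      exact ⟨a :: p, c, d, u, v, by simp [h1], by simp [h2], h3⟩

lemma mem_split_first {b : A} : ∀ {u : List A}, b ∈ u →
    ∃ u1 u2, u = u1 ++ b :: u2 ∧ b ∉ u1
  | x :: u, h => by
    by_cases hxb : x = b
    · exact ⟨[], u, by simp [hxb], by simp⟩
    · have hb : b ∈ u := by
        rcases List.mem_cons.mp h with h' | h'
        · exact absurd h'.symm hxb
        · exact h'
      obtain ⟨u1, u2, h1, h2⟩ := mem_split_first hb
      refine ⟨x :: u1, u2, by simp [h1], ?_⟩
      simp only [List.mem_cons, not_or]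
      exact ⟨fun h' => hxb h'.symm, h2⟩

/-- the segment of `w` between positions `i` (inclusive) and `j` (exclusive). -/
lemma seg_getElem (w : List A) (i j : ℕ) (hij : i < j) (hj : j < w.length) :
    ∃ hi : i < w.length,
      (∀ k (hk1 : i ≤ k) (hk2 : k < j),
        w[k]'(Nat.lt_trans hk2 hj) ∈ w[i]'hi :: (w.drop (i+1)).take (j - (i+1))) ∧
      (∀ x ∈ w[i]'hi :: (w.drop (i+1)).take (j - (i+1)),
        ∃ k, i ≤ k ∧ k < j ∧ ∃ hk : k < w.length, w[k] = x) := by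
  have hi : i < w.length := by omega
  refine ⟨hi, ?_, ?_⟩
  · intro k hk1 hk2
    rcases Nat.eq_or_lt_of_le hk1 with h | h
    · subst h; exact List.mem_cons_self
    · refine List.mem_cons_of_mem _ ?_
      have hlen : k - (i+1) < ((w.drop (i+1)).take (j - (i+1))).length := by
        simp [List.length_take, List.length_drop]; omega
      have : ((w.drop (i+1)).take (j - (i+1)))[k - (i+1)]'hlen = w[k]'(by omega) := by
        rw [List.getElem_take, List.getElem_drop]
        congr 1; omega
      exact this ▸ List.getElem_mem hlen
  · intro x hx
    rcases List.mem_cons.mp hx with h | h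
    · exact ⟨i, le_refl _, hij, hi, h.symm⟩
    · obtain ⟨t, ht, hxt⟩ := List.mem_iff_getElem.mp h
      have ht' : t < j - (i+1) ∧ i + 1 + t < w.length := by
        simp only [List.length_take, List.length_drop] at ht; omega
      refine ⟨i + 1 + t, by omega, by omega, ht'.2, ?_⟩
      rw [← hxt, List.getElem_take, List.getElem_drop]

end AK

theorem anisimov_knuth {A : Type*} [LinearOrder A] (I : A → A → Prop)
    (hsymm : ∀ a b, I a b → I b a)
    (w : List A) :
    (∀ w', MEquiv I w w' → w ≤ w') ↔
      ¬ ∃ (i j : ℕ) (hij : i < j) (hj : j < w.length),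
          w.get ⟨j, hj⟩ < w.get ⟨i, by omega⟩ ∧
          ∀ (k : ℕ) (hk₁ : i ≤ k) (hk₂ : k < j),
            I (w.get ⟨j, hj⟩) (w.get ⟨k, by omega⟩) := by
  constructor
  · -- minimal → no forbidden pattern
    rintro hmin ⟨i, j, hij, hj, hlt, hI⟩
    simp only [List.get_eq_getElem] at hlt hI
    have hi : i < w.length := by omega
    obtain ⟨hi', hmem, hmem'⟩ := seg_getElem w i j hij hj
    set p := w.take i with hp
    set a := w[i]'hi with ha
    set u1 := (w.drop (i+1)).take (j - (i+1)) with hu1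
    set b := w[j]'hj with hb
    set u2 := w.drop (j+1) with hu2
    have hw : w = p ++ ((a :: u1) ++ b :: u2) := by
      conv_lhs => rw [← List.take_append_drop i w]
      congr 1
      rw [List.drop_eq_getElem_cons hi]
      congr 1
      conv_lhs => rw [← List.take_append_drop (j - (i+1)) (w.drop (i+1))]
      congr 1
      rw [List.drop_drop]
      have hji : i + 1 + (j - (i + 1)) = j := by omega
      rw [hji, List.drop_eq_getElem_cons hj]
    have hIall : ∀ x ∈ a :: u1, I b x := by
      intro x hx
      obtain ⟨k, hk1, hk2, hk, hkx⟩ := hmem' x hx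
      exact hkx ▸ hI k hk1 hk2
    have hmeq := MEquiv.bubble hsymm b (a :: u1) p u2 hIall
    rw [← hw] at hmeq
    have hle := hmin _ hmeq
    have hlex : List.Lex (· < ·) (p ++ b :: ((a :: u1) ++ u2)) w := by
      have := lex_middle p hlt ((a :: u1) ++ u2) (u1 ++ b :: u2)
      rw [hw]
      simpa using this
    have : ¬ w ≤ p ++ b :: ((a :: u1) ++ u2) := not_le.mpr hlex
    exact this (by simpa using hle)
  · -- no forbidden pattern → minimal
    intro hno w' hmeq
    by_contra hle
    have hlt : List.Lex (· < ·) w' w := not_le.mp hle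
    obtain ⟨p, a, b, u, v, hwm, hw'm, hba⟩ :=
      lt_decomp hlt (by rw [hmeq.length_eq])
    -- b occurs in a :: u
    have hfilt := hmeq.filter_single b
    rw [hwm, hw'm] at hfilt
    simp only [List.filter_append] at hfilt
    have hfilt2 := List.append_cancel_left hfilt
    have hbmem : b ∈ a :: u := by
      have hb1 : b ∈ List.filter (· = b) (a :: u) := by
        rw [hfilt2]
        simp [List.filter_cons]
      exact List.mem_of_mem_filter hb1
    have hba' : b ≠ a := ne_of_lt hba
    have hbu : b ∈ u := (List.mem_cons.mp hbmem).resolve_left hba'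
    obtain ⟨u1, u2, hu, hbu1⟩ := mem_split_first hbu
    subst hwm
    subst hu
    subst hw'm
    have hIall : ∀ x ∈ a :: u1, I b x := by
      intro x hx
      by_contra hnI
      have hxb : x ≠ b := by
        rintro rfl
        rcases List.mem_cons.mp hx with h | h
        · exact hba' h
        · exact hbu1 h
      have hpair := hmeq.filter_pair hsymm b x hnI
      have hsh : p ++ a :: (u1 ++ b :: u2) = p ++ ((a :: u1) ++ (b :: u2)) := by simp
      rw [hsh] at hpair
      simp only [List.filter_append] at hpair
      have h2 := List.append_cancel_left hpair
      have hxL : x ∈ List.filter (fun y => decide (y = b ∨ y = x)) (a :: u1) :=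
        List.mem_filter.mpr ⟨hx, by simp⟩
      cases hL : List.filter (fun y => decide (y = b ∨ y = x)) (a :: u1) with
      | nil => rw [hL] at hxL; simp at hxL
      | cons y L' =>
        rw [hL] at h2
        have hyb : y = b := by
          rw [List.filter_cons_of_pos (by simp), List.filter_cons_of_pos (by simp),
            List.cons_append] at h2
          simpa using congrArg List.head? h2
        have hyL : y ∈ List.filter (fun y => decide (y = b ∨ y = x)) (a :: u1) := by
          rw [hL]; exact List.mem_cons_self
        have hymem : y ∈ a :: u1 := List.mem_of_mem_filter hyL
        rw [hyb] at hymem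
        rcases List.mem_cons.mp hymem with h | h
        · exact hba' h
        · exact hbu1 h
    -- build the forbidden pattern
    refine hno ⟨p.length, p.length + 1 + u1.length, by omega, by simp; omega, ?_⟩
    have hdrop : ((p ++ a :: (u1 ++ b :: u2)).drop (p.length + 1)) = u1 ++ b :: u2 := by
      have e : p ++ a :: (u1 ++ b :: u2) = (p ++ [a]) ++ (u1 ++ b :: u2) := by simp
      rw [e]
      have : (p ++ [a]).length = p.length + 1 := by simp
      rw [List.drop_left' this]
    have hi : p.length < (p ++ a :: (u1 ++ b :: u2)).length := by simp
    have hj : p.length + 1 + u1.length < (p ++ a :: (u1 ++ b :: u2)).length := by simp; omega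
    have hgi : (p ++ a :: (u1 ++ b :: u2))[p.length]'hi = a := by
      rw [List.getElem_append_right (le_refl p.length)]
      simp
    have hgj : (p ++ a :: (u1 ++ b :: u2))[p.length + 1 + u1.length]'hj = b := by
      have e : p ++ a :: (u1 ++ b :: u2) = (p ++ a :: u1) ++ (b :: u2) := by simp
      have hlen : (p ++ a :: u1).length ≤ p.length + 1 + u1.length := by simp; omega
      rw [List.getElem_of_eq e, List.getElem_append_right hlen]
      have h0 : p.length + 1 + u1.length - (p.length + (u1.length + 1)) = 0 := by omega
      simp [h0]
    obtain ⟨hi', hmem, hmem'⟩ :=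
      seg_getElem (p ++ a :: (u1 ++ b :: u2)) p.length (p.length + 1 + u1.length)
        (by omega) hj
    have hseg : ((p ++ a :: (u1 ++ b :: u2)).drop (p.length + 1)).take
        ((p.length + 1 + u1.length) - (p.length + 1)) = u1 := by
      rw [hdrop]
      have : p.length + 1 + u1.length - (p.length + 1) = u1.length := by omega
      rw [this, List.take_left]
    simp only [List.get_eq_getElem]
    refine ⟨by rw [hgj, hgi]; exact hba, ?_⟩
    intro k hk1 hk2
    have hmk := hmem k hk1 hk2
    rw [hseg, hgi] at hmk
    rw [hgj]
    exact hIall _ hmk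
end

section
/- Let A be a type equipped with a 'channel' labelling chan : A → C into a type C, and suppose the independence relation is exactly inter-channel: I a b holds if and only if chan a ≠ chan b. Let ≡ be the Mazurkiewicz equivalence generated by swapping adjacent independent letters. Then for any word w and any finite list of pairwise distinct channels c₁, …, cₙ containing all channels occurring in w, w is ≡-equivalent to the concatenation (w↾c₁) ++ (w↾c₂) ++ ⋯ ++ (w↾cₙ), where w↾c denotes the sublist of w consisting of the letters with channel c, in their original order. -/
private lemma MEquiv.cons_congr {A : Type*} {I : A → A → Prop} {w w' : List A} (x : A)
    (h : MEquiv I w w') : MEquiv I (x :: w) (x :: w') := by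
  induction h with
  | refl w => exact .refl _
  | symm _ ih => exact .symm ih
  | trans _ _ ih1 ih2 => exact .trans ih1 ih2
  | swap u v a b hab => exact MEquiv.swap (x :: u) v a b hab

private lemma MEquiv.append_left {A : Type*} {I : A → A → Prop} {w w' : List A} (u : List A)
    (h : MEquiv I w w') : MEquiv I (u ++ w) (u ++ w') := by
  induction u with
  | nil => exact h
  | cons x u ih => exact ih.cons_congr x

private lemma MEquiv.bubble_s8 {A : Type*} {I : A → A → Prop} (a : A) (f g : List A)
    (ha : ∀ b ∈ f, I a b) : MEquiv I (a :: (f ++ g)) (f ++ a :: g) := by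
  induction f with
  | nil => exact .refl _
  | cons b f ih =>
    refine .trans ?_ ((ih fun b hb => ha b (List.mem_cons_of_mem _ hb)).cons_congr b)
    have := MEquiv.swap [] (f ++ g) a b (ha b (List.mem_cons_self))
    simpa using this

private lemma MEquiv.split {A C : Type*} [DecidableEq C] (chan : A → C) (I : A → A → Prop)
    (hI : ∀ a b : A, I a b ↔ chan a ≠ chan b) (c : C) (w : List A) :
    MEquiv I w (w.filter (fun a => decide (chan a = c)) ++
      w.filter (fun a => !decide (chan a = c))) := by
  induction w with
  | nil => exact .refl _
  | cons a w ih =>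
    by_cases h : chan a = c
    · simp only [List.filter_cons, h, decide_true, Bool.not_true, if_true, cond_true]
      simpa using ih.cons_congr a
    · simp only [List.filter_cons, h, decide_false, Bool.not_false, if_false, cond_false]
      refine .trans (ih.cons_congr a) ?_
      exact MEquiv.bubble_s8 a _ _ fun b hb => by
        have hb' := List.of_mem_filter hb
        simp only [decide_eq_true_eq] at hb'
        exact (hI a b).2 (by rw [hb']; exact h)

theorem mequiv_channel_decomposition {A C : Type*} [DecidableEq C]
    (chan : A → C) (I : A → A → Prop)
    (hI : ∀ a b : A, I a b ↔ chan a ≠ chan b)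
    (w : List A) (cs : List C) (hnd : cs.Nodup)
    (hcover : ∀ a ∈ w, chan a ∈ cs) :
    MEquiv I w ((cs.map (fun c => w.filter (fun a => decide (chan a = c)))).flatten) := by
  induction cs generalizing w with
  | nil =>
    cases w with
    | nil => exact .refl _
    | cons a w => exact absurd (hcover a (List.mem_cons_self)) (by simp)
  | cons c cs ih =>
    have hnd' : cs.Nodup := hnd.of_cons
    have hc : c ∉ cs := by simp [List.nodup_cons] at hnd; exact hnd.1
    set g := w.filter (fun a => !decide (chan a = c)) with hg
    have hcov' : ∀ a ∈ g, chan a ∈ cs := by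
      intro a ha
      have h1 := List.of_mem_filter ha
      have h2 := hcover a (List.mem_of_mem_filter ha)
      simp only [Bool.not_eq_true', decide_eq_false_iff_not] at h1
      rcases List.mem_cons.1 h2 with h | h
      · exact absurd h h1
      · exact h
    have key : ∀ c' ∈ cs, g.filter (fun a => decide (chan a = c')) =
        w.filter (fun a => decide (chan a = c')) := by
      intro c' hc'
      have hcc : c' ≠ c := fun h => hc (h ▸ hc')
      rw [hg, List.filter_filter]
      apply List.filter_congr
      intro a _
      by_cases h : chan a = c'
      · simp [h, hcc]
      · simp [h]
    have hjoin : (cs.map (fun c' => g.filter (fun a => decide (chan a = c')))).flatten =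
        (cs.map (fun c' => w.filter (fun a => decide (chan a = c')))).flatten := by
      congr 1
      exact List.map_congr_left key
    refine .trans (MEquiv.split chan I hI c w) ?_
    have := (ih g hnd' hcov').append_left (w.filter (fun a => decide (chan a = c)))
    rw [hjoin] at this
    simpa using this
end

section
/- Let C be a linearly ordered type of channels and w = [c₁, …, cₙ] a list of (not necessarily distinct) channels. For a prefix p = [c₁, …, c_{m}] and a channel c, say Dep(p, c) is nonempty iff there exists k ≤ m with c < c_k and c_i < c for all i with k < i ≤ m. Then the following are equivalent: (1) for every j with 1 ≤ j ≤ n, Dep([c₁,…,c_{j−1}], cⱼ) is empty; (2) the list w is sorted in nondecreasing order. -/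
def DepNonempty {C : Type*} [LinearOrder C] (p : List C) (c : C) : Prop :=
  ∃ (k : ℕ) (hk : k < p.length), c < p.get ⟨k, hk⟩ ∧
    ∀ (i : ℕ) (hik : k < i) (hi : i < p.length), p.get ⟨i, hi⟩ < c

theorem dep_empty_iff_sorted {C : Type*} [LinearOrder C] (w : List C) :
    (∀ (j : ℕ) (hj : j < w.length), ¬ DepNonempty (w.take j) (w.get ⟨j, hj⟩)) ↔
      List.Pairwise (· ≤ ·) w := by
  constructor
  · intro h
    rw [← List.isChain_iff_pairwise, List.isChain_iff_getElem]
    intro i hi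
    by_contra hlt
    push_neg at hlt
    refine h (i + 1) (by omega) ⟨i, ?_, ?_, ?_⟩
    · simp [List.length_take]; omega
    · have : (w.take (i + 1)).get ⟨i, by simp [List.length_take]; omega⟩ =
        w.get ⟨i, by omega⟩ := by
        simp [List.get_eq_getElem, List.getElem_take]
      rw [this]
      exact hlt
    · intro i' hik hi'
      simp [List.length_take] at hi'
      omega
  · intro hs j hj hdep
    obtain ⟨k, hk, hck, -⟩ := hdep
    have hkl : k < j := by
      have := hk; simp [List.length_take] at this; omega
    have : (w.take j).get ⟨k, hk⟩ = w.get ⟨k, by omega⟩ := by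
      simp [List.get_eq_getElem, List.getElem_take]
    rw [this] at hck
    have := List.pairwise_iff_get.mp hs ⟨k, by omega⟩ ⟨j, hj⟩ (by simpa using hkl)
    exact absurd this (not_le.mpr hck)
end
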